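/- arXiv:1310.0154 — 2 statements merged into one kernel-verified Lean document; each statement's English description precedes it below -/
import Mathlib

section
/- There exist universal constants c0, c1, c2 > 0 with the following property. In the structured setting (U, V ∈ R^{n×r}, Ū, V̄ ∈ R^{n×r̄} with orthonormal columns, col(U) ⊆ col(Ū), col(V) ⊆ col(V̄), standard incoherence parameters μ0 and μ̄0 respectively), for any fixed matrix Z ∈ R^{n×n} and a Bernoulli(p) sample Ω with p ≥ c0 · μ0 μ̄0 r r̄ log n / n, with probability at least 1 − c1 n^{−c2}, ‖(P_T R_Ω − P_T)Z‖_{∞,2} ≤ (1/2) sqrt(n/(μ0 r)) ‖Z‖_∞ + (1/2) ‖Z‖_{∞,2}. -/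
open MeasureTheory Matrix

noncomputable section

/-- Frobenius norm of a real matrix. -/
def frobNorm {m n : ℕ} (X : Matrix (Fin m) (Fin n) ℝ) : ℝ :=
  Real.sqrt (∑ i, ∑ j, (X i j) ^ 2)

/-- Nuclear norm: sum of singular values (square roots of eigenvalues of XᵀX). -/
def nuclearNorm {m n : ℕ} (X : Matrix (Fin m) (Fin n) ℝ) : ℝ :=
  ∑ i, Real.sqrt ((show (Xᵀ * X).IsHermitian by
    simpa using Matrix.isHermitian_conjTranspose_mul_self X).eigenvalues i)

/-- Spectral norm: operator norm of the associated Euclidean linear map. -/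
def specNorm {m n : ℕ} (X : Matrix (Fin m) (Fin n) ℝ) : ℝ :=
  ‖(Matrix.toEuclideanLin X).toContinuousLinearMap‖

/-- Entrywise ℓ∞ norm. -/
def linf {m n : ℕ} (X : Matrix (Fin m) (Fin n) ℝ) : ℝ := ⨆ i, ⨆ j, |X i j|

/-- ℓ∞,2 norm: maximum of the largest row and column ℓ₂ norms. -/
def linf2 {n : ℕ} (X : Matrix (Fin n) (Fin n) ℝ) : ℝ :=
  max (⨆ i, Real.sqrt (∑ j, (X i j) ^ 2)) (⨆ j, Real.sqrt (∑ i, (X i j) ^ 2))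

/-- Operator norm (w.r.t. the Frobenius norm) of a map on n×n matrices. -/
def opNormMap {n : ℕ} (A : Matrix (Fin n) (Fin n) ℝ → Matrix (Fin n) (Fin n) ℝ) : ℝ :=
  ⨆ Z : {Z : Matrix (Fin n) (Fin n) ℝ // frobNorm Z ≤ 1}, frobNorm (A Z.1)

/-- P_Ω for a Boolean sample ω. -/
def projB {n : ℕ} (ω : Fin n × Fin n → Bool) (Z : Matrix (Fin n) (Fin n) ℝ) :
    Matrix (Fin n) (Fin n) ℝ := fun i j => if ω (i, j) then Z i j else 0

open Classical in
/-- P_Ω for a set Ω of indices. -/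
def projS {n : ℕ} (Ω : Set (Fin n × Fin n)) (Z : Matrix (Fin n) (Fin n) ℝ) :
    Matrix (Fin n) (Fin n) ℝ := fun i j => if (i, j) ∈ Ω then Z i j else 0

/-- The tangent-space projection P_T determined by U and V. -/
def projT {n r : ℕ} (U V : Matrix (Fin n) (Fin r) ℝ) (Z : Matrix (Fin n) (Fin n) ℝ) :
    Matrix (Fin n) (Fin n) ℝ :=
  U * Uᵀ * Z + Z * V * Vᵀ - U * Uᵀ * Z * V * Vᵀ

/-- Bernoulli(p) measure on Bool. -/
def bern (p : ℝ) : Measure Bool :=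
  ENNReal.ofReal p • Measure.dirac true + ENNReal.ofReal (1 - p) • Measure.dirac false

/-- Product Bernoulli(p) measure on index samples: each (i,j) observed independently
with probability p. -/
def sampleMeasure (n : ℕ) (p : ℝ) : Measure (Fin n × Fin n → Bool) :=
  Measure.pi fun _ => bern p

/-- ℓ₂ norm of the i-th row of U, i.e. ‖Uᵀ e_i‖₂. -/
def rowNorm {n r : ℕ} (U : Matrix (Fin n) (Fin r) ℝ) (i : Fin n) : ℝ :=
  Real.sqrt (∑ k, (U i k) ^ 2)

/-- The tangent-space projection P_T in the structured (cluster) setting. -/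
def projTc {n r rb : ℕ} (U V : Matrix (Fin n) (Fin r) ℝ)
    (Ub Vb : Matrix (Fin n) (Fin rb) ℝ) (Z : Matrix (Fin n) (Fin n) ℝ) :
    Matrix (Fin n) (Fin n) ℝ :=
  U * Uᵀ * Z * Vb * Vbᵀ + Ub * Ubᵀ * Z * V * Vᵀ - U * Uᵀ * Z * V * Vᵀ

/-- The projection P_{T⊥} in the structured (cluster) setting. -/
def projTperpC {n r rb : ℕ} (U V : Matrix (Fin n) (Fin r) ℝ)
    (Ub Vb : Matrix (Fin n) (Fin rb) ℝ) (Z : Matrix (Fin n) (Fin n) ℝ) :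
    Matrix (Fin n) (Fin n) ℝ :=
  (Ub * Ubᵀ - U * Uᵀ) * Z * (Vb * Vbᵀ - V * Vᵀ)

-- ===== auxiliary lemmas =====

lemma aux_exp_le_one_add_add_sq {x : ℝ} (hx : |x| ≤ 1) : Real.exp x ≤ 1 + x + x ^ 2 := by
  have h := Real.exp_bound hx (n := 2) (by norm_num)
  have h2 : ∑ m ∈ Finset.range 2, x ^ m / (m.factorial : ℝ) = 1 + x := by
    simp [Finset.sum_range_succ]
  rw [h2] at h
  have h3 : |x| ^ 2 * ((2 : ℕ).succ / ((2:ℕ).factorial * (2:ℕ) : ℝ)) = (3/4) * x ^ 2 := by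
    rw [sq_abs]; norm_num; ring
  rw [h3] at h
  have := abs_le.mp h
  nlinarith [sq_nonneg x]

lemma aux_factor_bound {p u : ℝ} (hp : 0 < p) (hp1 : p ≤ 1) (hu : |u| ≤ p) :
    p * Real.exp (u * (1 - p) / p) + (1 - p) * Real.exp (-u) ≤ Real.exp (u ^ 2 / p) := by
  have hup : |u| ≤ 1 := hu.trans hp1
  have h1 : |u * (1 - p) / p| ≤ 1 := by
    rw [abs_div, abs_mul, abs_of_pos hp, abs_of_nonneg (by linarith : (0:ℝ) ≤ 1 - p)]
    rw [div_le_one hp]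
    nlinarith [abs_nonneg u]
  have e1 := aux_exp_le_one_add_add_sq h1
  have e2 := aux_exp_le_one_add_add_sq (by rwa [abs_neg] : |(-u)| ≤ 1)
  have hpne : p ≠ 0 := ne_of_gt hp
  have key1 : p * (1 + u*(1-p)/p + (u*(1-p)/p)^2) + (1-p)*(1 + -u + (-u)^2)
      = 1 + u^2*(1-p)/p + (1-p)*u^2 - u^2*(1-p) := by field_simp; ring
  have key2 : u^2*(1-p)/p + (1-p)*u^2 - u^2*(1-p) ≤ u^2/p := by
    rw [div_add' _ _ _ hpne, div_sub' hpne, div_le_div_iff₀ hp hp]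
    nlinarith [sq_nonneg (u*p)]
  have := Real.add_one_le_exp (u ^ 2 / p)
  nlinarith [mul_le_mul_of_nonneg_left e1 hp.le,
    mul_le_mul_of_nonneg_left e2 (by linarith : (0:ℝ) ≤ 1 - p)]

lemma aux_sum_prod_bool {ι : Type*} [Fintype ι] [DecidableEq ι] (g : ι → Bool → ℝ) :
    ∑ ω : ι → Bool, ∏ i, g i (ω i) = ∏ i, (g i true + g i false) := by
  have := Finset.prod_univ_sum (fun _ : ι => (Finset.univ : Finset Bool)) (fun i b => g i b)
  rw [Fintype.piFinset_univ] at this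
  rw [← this]
  congr 1; ext i
  simp [Fintype.sum_bool]

lemma aux_chernoff {ι : Type*} [Fintype ι] [DecidableEq ι] (w : ι → ℝ) (p t l : ℝ)
    (hp : 0 < p) (hp1 : p ≤ 1) (hl : 0 ≤ l) (hw : ∀ i, l * |w i| ≤ p) :
    ∑ ω ∈ Finset.univ.filter
        (fun ω : ι → Bool => t < ∑ i, w i * ((if ω i then 1/p else 0) - 1)),
        ∏ i, (if ω i then p else 1 - p)
      ≤ Real.exp (l^2 * (∑ i, (w i)^2) / p - l * t) := by
  set F : (ι → Bool) → ℝ := fun ω => ∑ i, w i * ((if ω i then 1/p else 0) - 1) with hF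
  have hWnn : ∀ ω : ι → Bool, 0 ≤ ∏ i, (if ω i then p else 1 - p) := by
    intro ω; apply Finset.prod_nonneg; intro i _
    by_cases h : ω i <;> simp [h] <;> linarith
  have step1 : ∑ ω ∈ Finset.univ.filter (fun ω : ι → Bool => t < F ω),
      ∏ i, (if ω i then p else 1 - p)
      ≤ ∑ ω : ι → Bool, (∏ i, (if ω i then p else 1 - p)) * Real.exp (l * (F ω - t)) := by
    calc ∑ ω ∈ Finset.univ.filter (fun ω : ι → Bool => t < F ω),
        ∏ i, (if ω i then p else 1 - p)
        ≤ ∑ ω ∈ Finset.univ.filter (fun ω : ι → Bool => t < F ω),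
          (∏ i, (if ω i then p else 1 - p)) * Real.exp (l * (F ω - t)) := by
          apply Finset.sum_le_sum
          intro ω hω
          rw [Finset.mem_filter] at hω
          nth_rewrite 1 [← mul_one (∏ i, (if ω i then p else 1 - p))]
          apply mul_le_mul_of_nonneg_left _ (hWnn ω)
          rw [← Real.exp_zero]
          apply Real.exp_le_exp.mpr
          have : 0 ≤ F ω - t := by linarith [hω.2]
          positivity
      _ ≤ ∑ ω : ι → Bool, (∏ i, (if ω i then p else 1 - p)) * Real.exp (l * (F ω - t)) := by
          apply Finset.sum_le_sum_of_subset_of_nonneg (Finset.filter_subset _ _)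
          intro ω _ _
          exact mul_nonneg (hWnn ω) (Real.exp_nonneg _)
  set g : ι → Bool → ℝ := fun i b =>
    (if b then p else 1 - p) * Real.exp (l * (w i * ((if b then 1/p else 0) - 1))) with hg
  have step2 : ∑ ω : ι → Bool, (∏ i, (if ω i then p else 1 - p)) * Real.exp (l * (F ω - t))
      = Real.exp (-(l*t)) *
        ∏ i, (p * Real.exp (l * w i * (1/p - 1)) + (1-p) * Real.exp (-(l * w i))) := by
    have hsplit : ∀ ω : ι → Bool,
        (∏ i, (if ω i then p else 1 - p)) * Real.exp (l * (F ω - t))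
        = Real.exp (-(l*t)) * ∏ i, g i (ω i) := by
      intro ω
      have harg : l * (F ω - t) = -(l*t) + ∑ i, l * (w i * ((if ω i then 1/p else 0) - 1)) := by
        rw [hF, ← Finset.mul_sum]; ring
      have hprod : ∏ i, g i (ω i)
          = (∏ i, (if ω i then p else 1 - p)) *
            ∏ i, Real.exp (l * (w i * ((if ω i then 1/p else 0) - 1))) := by
        rw [← Finset.prod_mul_distrib]
      rw [harg, Real.exp_add, Real.exp_sum, hprod]
      ring
    rw [Finset.sum_congr rfl (fun ω _ => hsplit ω), ← Finset.mul_sum, aux_sum_prod_bool g]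
    congr 1
    apply Finset.prod_congr rfl
    intro i _
    simp only [hg, if_true, if_false, Bool.false_eq_true]
    ring_nf
  have step3 : ∏ i, (p * Real.exp (l * w i * (1/p - 1)) + (1-p) * Real.exp (-(l * w i)))
      ≤ ∏ i, Real.exp ((l * w i)^2 / p) := by
    apply Finset.prod_le_prod
    · intro i _
      have h1 : (0:ℝ) ≤ p * Real.exp (l * w i * (1/p - 1)) := by positivity
      have h2 : (0:ℝ) ≤ (1-p) * Real.exp (-(l * w i)) := by
        apply mul_nonneg (by linarith) (Real.exp_nonneg _)
      linarith
    · intro i _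
      have habs : |l * w i| ≤ p := by
        rw [abs_mul, abs_of_nonneg hl]; exact hw i
      have := aux_factor_bound hp hp1 habs
      have harg : l * w i * (1/p - 1) = (l * w i) * (1 - p) / p := by
        field_simp
      rw [harg]
      exact this
  have step4 : ∏ i, Real.exp ((l * w i)^2 / p) = Real.exp (∑ i, (l * w i)^2 / p) :=
    (Real.exp_sum _ _).symm
  have harg : -(l*t) + ∑ i, (l * w i)^2 / p = l^2 * (∑ i, (w i)^2) / p - l * t := by
    rw [← Finset.sum_div]
    have : ∑ i, (l * w i)^2 = l^2 * ∑ i, (w i)^2 := by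
      rw [Finset.mul_sum]
      apply Finset.sum_congr rfl
      intro i _; ring
    rw [this]; ring
  calc ∑ ω ∈ Finset.univ.filter (fun ω : ι → Bool => t < F ω),
        ∏ i, (if ω i then p else 1 - p)
      ≤ ∑ ω : ι → Bool, (∏ i, (if ω i then p else 1 - p)) * Real.exp (l * (F ω - t)) := step1
    _ = Real.exp (-(l*t)) *
        ∏ i, (p * Real.exp (l * w i * (1/p - 1)) + (1-p) * Real.exp (-(l * w i))) := step2
    _ ≤ Real.exp (-(l*t)) * ∏ i, Real.exp ((l * w i)^2 / p) :=
        mul_le_mul_of_nonneg_left step3 (Real.exp_nonneg _)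
    _ = Real.exp (l^2 * (∑ i, (w i)^2) / p - l * t) := by
        rw [step4, ← Real.exp_add, harg]

instance bern_finite (p : ℝ) : IsFiniteMeasure (bern p) := by
  constructor
  simp only [bern, Measure.add_apply, Measure.smul_apply, smul_eq_mul]
  simp [ENNReal.mul_lt_top, ENNReal.ofReal_lt_top]

lemma aux_bern_singleton (p : ℝ) (b : Bool) :
    bern p {b} = ENNReal.ofReal (if b then p else 1 - p) := by
  cases b <;>
    simp [bern, Measure.dirac_apply, Set.indicator, Measure.add_apply, Measure.smul_apply]

lemma aux_sampleMeasure_singleton (n : ℕ) (p : ℝ) (hp0 : 0 ≤ p) (hp1 : p ≤ 1)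
    (ω : Fin n × Fin n → Bool) :
    sampleMeasure n p {ω} = ENNReal.ofReal (∏ i, if ω i then p else 1 - p) := by
  rw [← Set.univ_pi_singleton ω]
  rw [sampleMeasure, Measure.pi_pi]
  rw [ENNReal.ofReal_prod_of_nonneg]
  · exact Finset.prod_congr rfl fun i _ => aux_bern_singleton p (ω i)
  · intro i _
    by_cases h : ω i <;> simp [h] <;> linarith

lemma aux_sampleMeasure_univ (n : ℕ) (p : ℝ) (hp0 : 0 ≤ p) (hp1 : p ≤ 1) :
    sampleMeasure n p Set.univ = 1 := by
  rw [sampleMeasure, Measure.pi_univ]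
  have hb : bern p Set.univ = 1 := by
    simp only [bern, Measure.add_apply, Measure.smul_apply, smul_eq_mul]
    rw [Measure.dirac_apply, Measure.dirac_apply]
    simp [Set.indicator]
    rw [← ENNReal.ofReal_add hp0 (by linarith)]
    norm_num
  rw [Finset.prod_congr rfl fun _ _ => hb]
  simp

lemma aux_sampleMeasure_set (n : ℕ) (p : ℝ) (hp0 : 0 ≤ p) (hp1 : p ≤ 1)
    (P : (Fin n × Fin n → Bool) → Prop) [DecidablePred P] :
    sampleMeasure n p {ω | P ω}
      = ENNReal.ofReal (∑ ω ∈ Finset.univ.filter P, ∏ i, if ω i then p else 1 - p) := by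
  have hset : {ω | P ω} = ⋃ ω ∈ Finset.univ.filter P, {ω} := by
    ext x; simp
  rw [hset, measure_biUnion_finset]
  · rw [ENNReal.ofReal_sum_of_nonneg]
    · exact Finset.sum_congr rfl fun ω _ => aux_sampleMeasure_singleton n p hp0 hp1 ω
    · intro ω _
      apply Finset.prod_nonneg
      intro i _
      by_cases h : ω i <;> simp [h] <;> linarith
  · intro a _ b _ hab
    simp [Function.onFun, Set.disjoint_singleton, hab]
  · intro b _
    rw [← Set.univ_pi_singleton b]
    exact MeasurableSet.univ_pi fun i => measurableSet_singleton _

lemma aux_mul3_apply {n : ℕ} (A M D : Matrix (Fin n) (Fin n) ℝ) (i j : Fin n) :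
    (A * M * D) i j = ∑ a, ∑ b, A i a * M a b * D b j := by
  simp only [Matrix.mul_apply, Finset.sum_mul]
  exact Finset.sum_comm

lemma aux_projTc_apply {n r rb : ℕ} (U V : Matrix (Fin n) (Fin r) ℝ)
    (Ub Vb : Matrix (Fin n) (Fin rb) ℝ) (M : Matrix (Fin n) (Fin n) ℝ) (i j : Fin n) :
    projTc U V Ub Vb M i j
      = ∑ a, ∑ b, ((U*Uᵀ) i a * (Vb*Vbᵀ) b j + (Ub*Ubᵀ) i a * (V*Vᵀ) b j
          - (U*Uᵀ) i a * (V*Vᵀ) b j) * M a b := by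
  have h1 : U * Uᵀ * M * Vb * Vbᵀ = (U*Uᵀ) * M * (Vb*Vbᵀ) := by
    rw [Matrix.mul_assoc (U * Uᵀ * M)]
  have h2 : Ub * Ubᵀ * M * V * Vᵀ = (Ub*Ubᵀ) * M * (V*Vᵀ) := by
    rw [Matrix.mul_assoc (Ub * Ubᵀ * M)]
  have h3 : U * Uᵀ * M * V * Vᵀ = (U*Uᵀ) * M * (V*Vᵀ) := by
    rw [Matrix.mul_assoc (U * Uᵀ * M)]
  rw [projTc, Matrix.sub_apply, Matrix.add_apply, h1, h2, h3,
    aux_mul3_apply, aux_mul3_apply, aux_mul3_apply]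
  have e1 : ∀ (D : Matrix (Fin n) (Fin n) ℝ) (A : Matrix (Fin n) (Fin n) ℝ),
      ∑ a, ∑ b, A i a * M a b * D b j = ∑ a, ∑ b, A i a * D b j * M a b := by
    intro D A
    apply Finset.sum_congr rfl; intro a _
    apply Finset.sum_congr rfl; intro b _
    ring
  simp only [add_mul, sub_mul, Finset.sum_add_distrib, Finset.sum_sub_distrib]
  rw [e1, e1, e1]

lemma aux_gram_symm {n r : ℕ} (U : Matrix (Fin n) (Fin r) ℝ) (a i : Fin n) :
    (U*Uᵀ) a i = (U*Uᵀ) i a := by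
  simp only [Matrix.mul_apply, Matrix.transpose_apply]
  exact Finset.sum_congr rfl fun k _ => mul_comm _ _

lemma aux_gram_sq_row {n r : ℕ} (U : Matrix (Fin n) (Fin r) ℝ) (hU : Uᵀ * U = 1) (i : Fin n) :
    ∑ a, ((U*Uᵀ) i a)^2 = ∑ k, (U i k)^2 := by
  have h1 : ∑ a, ((U*Uᵀ) i a)^2 = ((U*Uᵀ) * (U*Uᵀ)) i i := by
    rw [Matrix.mul_apply]
    apply Finset.sum_congr rfl; intro a _
    rw [aux_gram_symm U a i]; ring
  have h2 : (U*Uᵀ) * (U*Uᵀ) = U*Uᵀ := by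
    calc (U*Uᵀ) * (U*Uᵀ) = U * (Uᵀ * U) * Uᵀ := by
          rw [Matrix.mul_assoc, Matrix.mul_assoc, Matrix.mul_assoc]
      _ = U*Uᵀ := by rw [hU, Matrix.mul_one]
  rw [h1, h2, Matrix.mul_apply]
  apply Finset.sum_congr rfl; intro k _
  simp [Matrix.transpose_apply]; ring

lemma aux_proj_diag_le {n r rb : ℕ} (V : Matrix (Fin n) (Fin r) ℝ)
    (Vb : Matrix (Fin n) (Fin rb) ℝ)
    (hV : Vᵀ * V = 1) (hVb : Vbᵀ * Vb = 1) (C : Matrix (Fin rb) (Fin r) ℝ) (hC : V = Vb * C)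
    (j : Fin n) : (V*Vᵀ) j j ≤ (Vb*Vbᵀ) j j := by
  have hCC : Cᵀ * C = 1 := by
    have : Vᵀ * V = Cᵀ * (Vbᵀ * Vb) * C := by
      rw [hC, Matrix.transpose_mul]
      rw [Matrix.mul_assoc, Matrix.mul_assoc, Matrix.mul_assoc]
    rw [hV, hVb, Matrix.mul_one] at this
    exact this.symm
  set P : Matrix (Fin rb) (Fin rb) ℝ := C * Cᵀ with hP
  have hPP : P * P = P := by
    rw [hP]
    calc C * Cᵀ * (C * Cᵀ) = C * (Cᵀ * C) * Cᵀ := by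
          rw [Matrix.mul_assoc, Matrix.mul_assoc, Matrix.mul_assoc]
      _ = C * Cᵀ := by rw [hCC, Matrix.mul_one]
  have hPt : Pᵀ = P := by rw [hP, Matrix.transpose_mul, Matrix.transpose_transpose]
  set M : Matrix (Fin n) (Fin rb) ℝ := Vb * (1 - P) with hM
  have hMM : M * Mᵀ = Vb*Vbᵀ - V*Vᵀ := by
    have hQ : (1 - P) * (1 - P) = 1 - P := by
      rw [Matrix.sub_mul, Matrix.mul_sub, Matrix.mul_sub, hPP, Matrix.one_mul,
        Matrix.one_mul, Matrix.mul_one]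
      abel
    have hQt : (1 - P)ᵀ = 1 - P := by rw [Matrix.transpose_sub, Matrix.transpose_one, hPt]
    rw [hM, Matrix.transpose_mul, hQt]
    calc Vb * (1 - P) * ((1 - P) * Vbᵀ) = Vb * ((1 - P) * (1 - P)) * Vbᵀ := by
          rw [Matrix.mul_assoc, Matrix.mul_assoc, Matrix.mul_assoc]
      _ = Vb * (1 - P) * Vbᵀ := by rw [hQ]
      _ = Vb*Vbᵀ - V*Vᵀ := by
          rw [Matrix.mul_sub, Matrix.mul_one, Matrix.sub_mul, hC]
          congr 1
          rw [Matrix.transpose_mul, hP]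
          rw [Matrix.mul_assoc, Matrix.mul_assoc, Matrix.mul_assoc]
  have hnn : 0 ≤ (M * Mᵀ) j j := by
    rw [Matrix.mul_apply]
    apply Finset.sum_nonneg; intro k _
    simp only [Matrix.transpose_apply]
    exact mul_self_nonneg _
  rw [hMM, Matrix.sub_apply] at hnn
  linarith

lemma aux_three_sq (x y z : ℝ) : (x + y - z)^2 ≤ 3*(x^2+y^2+z^2) := by
  nlinarith [sq_nonneg (x-y), sq_nonneg (x+z), sq_nonneg (y+z)]

lemma aux_linf_entry {m k : ℕ} (X : Matrix (Fin m) (Fin k) ℝ) (i : Fin m) (j : Fin k) :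
    |X i j| ≤ linf X := by
  have h1 : |X i j| ≤ ⨆ j', |X i j'| :=
    le_ciSup (f := fun j' => |X i j'|) (Set.Finite.bddAbove (Set.finite_range _)) j
  have h2 : (⨆ j', |X i j'|) ≤ ⨆ i', ⨆ j', |X i' j'| :=
    le_ciSup (f := fun i' => ⨆ j', |X i' j'|) (Set.Finite.bddAbove (Set.finite_range _)) i
  exact h1.trans h2

lemma aux_linf_nonneg {m k : ℕ} (X : Matrix (Fin m) (Fin k) ℝ) : 0 ≤ linf X :=
  Real.iSup_nonneg fun _ => Real.iSup_nonneg fun _ => abs_nonneg _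

lemma aux_linf2_nonneg {m : ℕ} (X : Matrix (Fin m) (Fin m) ℝ) : 0 ≤ linf2 X :=
  le_trans (Real.iSup_nonneg fun _ => Real.sqrt_nonneg _) (le_max_left _ _)

lemma aux_sum_sq_prod {n : ℕ} (f g : Fin n → ℝ) :
    ∑ ab : Fin n × Fin n, (f ab.1)^2 * (g ab.2)^2 = (∑ a, (f a)^2) * (∑ b, (g b)^2) := by
  rw [Finset.sum_mul_sum]
  exact Fintype.sum_prod_type _

lemma aux_card_smul (n : ℕ) (hn : 3 ≤ n) :
    (Finset.univ : Finset (Fin n × Fin n)).card •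
        (ENNReal.ofReal (Real.exp 1 * (n:ℝ)^(-(10:ℝ)))
          + ENNReal.ofReal (Real.exp 1 * (n:ℝ)^(-(10:ℝ))))
      ≤ ENNReal.ofReal (16 * (n:ℝ)^(-(4:ℝ))) := by
  have hn0 : (0:ℝ) < n := by positivity
  have hnR : (3:ℝ) ≤ n := by exact_mod_cast hn
  have hBnn : (0:ℝ) ≤ Real.exp 1 * (n:ℝ)^(-(10:ℝ)) := by positivity
  have hcard : (Finset.univ : Finset (Fin n × Fin n)).card = n * n := by
    rw [Finset.card_univ]
    exact (Fintype.card_prod (Fin n) (Fin n)).trans (by rw [Fintype.card_fin])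
  have hcast : ((n * n : ℕ) : ENNReal) = ENNReal.ofReal ((n:ℝ) * (n:ℝ)) := by
    rw [← ENNReal.ofReal_natCast (n*n)]
    congr 1
    push_cast
    ring
  rw [hcard, ← ENNReal.ofReal_add hBnn hBnn, nsmul_eq_mul, hcast,
    ← ENNReal.ofReal_mul (by positivity)]
  apply ENNReal.ofReal_le_ofReal
  have he3 : Real.exp 1 ≤ 3 := le_of_lt (lt_trans Real.exp_one_lt_d9 (by norm_num))
  have hnn10 : (n:ℝ)*(n:ℝ) * (n:ℝ)^(-(10:ℝ)) = (n:ℝ)^(-(8:ℝ)) := by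
    rw [show (n:ℝ)*(n:ℝ) = (n:ℝ)^((2:ℕ):ℝ) from by rw [Real.rpow_natCast]; ring]
    rw [← Real.rpow_add hn0]
    norm_num
  have h8 : (n:ℝ)^(-(8:ℝ)) ≤ (n:ℝ)^(-(4:ℝ)) :=
    Real.rpow_le_rpow_of_exponent_le (by linarith) (by norm_num)
  have hx8 : (0:ℝ) ≤ (n:ℝ)^(-(8:ℝ)) := by positivity
  calc (n:ℝ)*(n:ℝ) * (Real.exp 1 * (n:ℝ)^(-(10:ℝ)) + Real.exp 1 * (n:ℝ)^(-(10:ℝ)))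
      = (2*Real.exp 1) * ((n:ℝ)*(n:ℝ) * (n:ℝ)^(-(10:ℝ))) := by ring
    _ = (2*Real.exp 1) * (n:ℝ)^(-(8:ℝ)) := by rw [hnn10]
    _ ≤ 6 * (n:ℝ)^(-(8:ℝ)) := by
        apply mul_le_mul_of_nonneg_right _ hx8
        linarith
    _ ≤ 6 * (n:ℝ)^(-(4:ℝ)) := by
        apply mul_le_mul_of_nonneg_left h8 (by norm_num)
    _ ≤ 16 * (n:ℝ)^(-(4:ℝ)) := by
        apply mul_le_mul_of_nonneg_right _ (by positivity)
        norm_num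

set_option maxHeartbeats 1000000 in
lemma main_bound (n r rb : ℕ) (Z : Matrix (Fin n) (Fin n) ℝ)
    (U V : Matrix (Fin n) (Fin r) ℝ) (Ub Vb : Matrix (Fin n) (Fin rb) ℝ)
    (μ0 μb0 p : ℝ)
    (hU : Uᵀ * U = 1) (hV : Vᵀ * V = 1) (hUb : Ubᵀ * Ub = 1) (hVb : Vbᵀ * Vb = 1)
    (hCU : ∃ C : Matrix (Fin rb) (Fin r) ℝ, U = Ub * C)
    (hCV : ∃ C : Matrix (Fin rb) (Fin r) ℝ, V = Vb * C)
    (hIU : ∀ i, rowNorm U i ≤ Real.sqrt (μ0 * r / n))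
    (hIV : ∀ j, rowNorm V j ≤ Real.sqrt (μ0 * r / n))
    (hIUb : ∀ i, rowNorm Ub i ≤ Real.sqrt (μb0 * rb / n))
    (hIVb : ∀ j, rowNorm Vb j ≤ Real.sqrt (μb0 * rb / n))
    (hp0 : 0 ≤ p) (hp1 : p ≤ 1)
    (hpc : 60 * μ0 * μb0 * r * rb * Real.log n / n ≤ p)
    (hn : 3 ≤ n) (hr : 0 < r) (hL : 0 < linf Z) :
    ENNReal.ofReal (1 - 16 * ((n : ℝ)) ^ (-(4:ℝ))) ≤
      sampleMeasure n p
        {ω | linf2 (projTc U V Ub Vb (p⁻¹ • projB ω Z) - projTc U V Ub Vb Z) ≤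
          1 / 2 * Real.sqrt ((n : ℝ) / (μ0 * r)) * linf Z + 1 / 2 * linf2 Z} := by
  classical
  obtain ⟨CU, hCUeq⟩ := hCU
  obtain ⟨CV, hCVeq⟩ := hCV
  have hn0 : (0:ℝ) < n := by positivity
  have hnR : (3:ℝ) ≤ n := by exact_mod_cast hn
  have hrR : (1:ℝ) ≤ r := by exact_mod_cast hr
  have hlogpos : 0 < Real.log n := Real.log_pos (by linarith)
  set L := linf Z with hLdef
  have hZb : ∀ a b, |Z a b| ≤ L := fun a b => aux_linf_entry Z a b
  -- trace identity
  have htr : ∀ {r' : ℕ} (W : Matrix (Fin n) (Fin r') ℝ), Wᵀ * W = 1 →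
      ∑ i, ∑ k, (W i k)^2 = (r' : ℝ) := by
    intro r' W hW
    rw [Finset.sum_comm]
    have h1 : ∀ k, ∑ i, (W i k)^2 = (Wᵀ * W) k k := by
      intro k; simp [Matrix.mul_apply, pow_two]
    rw [Finset.sum_congr rfl fun k _ => h1 k, hW]
    have h2 : ∀ k : Fin r', (1 : Matrix (Fin r') (Fin r') ℝ) k k = 1 :=
      fun k => Matrix.one_apply_eq k
    rw [Finset.sum_congr rfl fun k _ => h2 k, Finset.sum_const, Finset.card_univ,
      Fintype.card_fin, nsmul_eq_mul, mul_one]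
  -- rb positive
  have hrb : 0 < rb := by
    rcases Nat.eq_zero_or_pos rb with h0 | h
    swap
    · exact h
    exfalso
    subst h0
    have hU0 : U = 0 := by
      rw [hCUeq]; ext i k; rw [Matrix.mul_apply]; simp
    have h1 := congrArg (fun M => M ⟨0, hr⟩ ⟨0, hr⟩) hU
    rw [hU0] at h1
    simp [Matrix.mul_apply, Matrix.one_apply] at h1
  have hrbR : (1:ℝ) ≤ rb := by exact_mod_cast hrb
  set A0 := μ0 * r / n with hA0
  set B0 := μb0 * rb / n with hB0
  -- positivity of A0, B0
  have hpos_gen : ∀ {r' : ℕ} (W : Matrix (Fin n) (Fin r') ℝ) (X : ℝ), Wᵀ * W = 1 → 0 < r' →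
      (∀ i, rowNorm W i ≤ Real.sqrt X) → 0 < X := by
    intro r' W X hW hr' hWX
    by_contra h
    push_neg at h
    have hs : ∀ i, ∑ k, (W i k)^2 ≤ 0 := by
      intro i
      have h1 := hWX i
      rw [rowNorm] at h1
      have h2 : Real.sqrt X = 0 := Real.sqrt_eq_zero'.mpr h
      rw [h2] at h1
      have h3 : Real.sqrt (∑ k, (W i k)^2) = 0 :=
        le_antisymm h1 (Real.sqrt_nonneg _)
      have h4 : 0 ≤ ∑ k, (W i k)^2 := Finset.sum_nonneg fun _ _ => sq_nonneg _
      nlinarith [Real.sq_sqrt h4]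
    have h5 : (r':ℝ) ≤ 0 := by
      rw [← htr W hW]; exact Finset.sum_nonpos fun i _ => hs i
    have : (1:ℝ) ≤ r' := by exact_mod_cast hr'
    linarith
  have hA0pos : 0 < A0 := hpos_gen U A0 hU hr hIU
  have hB0pos : 0 < B0 := hpos_gen Ub B0 hUb hrb hIUb
  -- squared incoherence
  have hsq_gen : ∀ {r' : ℕ} (W : Matrix (Fin n) (Fin r') ℝ) (X : ℝ), 0 ≤ X →
      (∀ i, rowNorm W i ≤ Real.sqrt X) → ∀ i, ∑ k, (W i k)^2 ≤ X := by
    intro r' W X hX hWX i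
    have h1 := hWX i
    rw [rowNorm] at h1
    have h2 : 0 ≤ ∑ k, (W i k)^2 := Finset.sum_nonneg fun _ _ => sq_nonneg _
    calc ∑ k, (W i k)^2 = (Real.sqrt (∑ k, (W i k)^2))^2 := (Real.sq_sqrt h2).symm
      _ ≤ (Real.sqrt X)^2 := pow_le_pow_left₀ (Real.sqrt_nonneg _) h1 2
      _ = X := Real.sq_sqrt hX
  have hsU : ∀ i, ∑ k, (U i k)^2 ≤ A0 := hsq_gen U A0 hA0pos.le hIU
  have hsV : ∀ j, ∑ k, (V j k)^2 ≤ A0 := hsq_gen V A0 hA0pos.le hIV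
  have hsUb : ∀ i, ∑ k, (Ub i k)^2 ≤ B0 := hsq_gen Ub B0 hB0pos.le hIUb
  have hsVb : ∀ j, ∑ k, (Vb j k)^2 ≤ B0 := hsq_gen Vb B0 hB0pos.le hIVb
  -- μb0 * rb ≥ 1
  have hnB0 : (n:ℝ) * B0 = μb0 * rb := by
    rw [hB0]; field_simp
  have hμbrb : 1 ≤ μb0 * rb := by
    have h1 : (rb:ℝ) ≤ (n:ℝ) * B0 := by
      rw [← htr Ub hUb]
      calc ∑ i, ∑ k, (Ub i k)^2 ≤ ∑ _i : Fin n, B0 :=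
            Finset.sum_le_sum fun i _ => hsUb i
        _ = (n:ℝ) * B0 := by
            rw [Finset.sum_const, Finset.card_univ, Fintype.card_fin, nsmul_eq_mul]
    rw [hnB0] at h1
    linarith
  have hμ0r : 0 < μ0 * r := by
    have h1 : μ0 * r = A0 * n := by rw [hA0]; field_simp
    rw [h1]; exact mul_pos hA0pos hn0
  have hμ0pos : 0 < μ0 := by nlinarith
  have hμb0pos : 0 < μb0 := by nlinarith
  have hppos : 0 < p := by
    refine lt_of_lt_of_le ?_ hpc
    apply div_pos _ hn0
    have hrpos : (0:ℝ) < r := by linarith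
    have hrbpos : (0:ℝ) < rb := by linarith
    positivity
  -- gram row bounds
  have hAA : ∀ i : Fin n, ∑ a, ((U*Uᵀ) i a)^2 ≤ A0 := by
    intro i; rw [aux_gram_sq_row U hU i]; exact hsU i
  have hBB : ∀ i : Fin n, ∑ a, ((Ub*Ubᵀ) i a)^2 ≤ B0 := by
    intro i; rw [aux_gram_sq_row Ub hUb i]; exact hsUb i
  have hDD : ∀ j : Fin n, ∑ b, ((Vb*Vbᵀ) b j)^2 ≤ B0 := by
    intro j
    have h1 : ∀ b, ((Vb*Vbᵀ) b j)^2 = ((Vb*Vbᵀ) j b)^2 := by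
      intro b; rw [aux_gram_symm]
    rw [Finset.sum_congr rfl fun b _ => h1 b, aux_gram_sq_row Vb hVb j]
    exact hsVb j
  have hEEa : ∀ j : Fin n, ∑ b, ((V*Vᵀ) b j)^2 ≤ A0 := by
    intro j
    have h1 : ∀ b, ((V*Vᵀ) b j)^2 = ((V*Vᵀ) j b)^2 := by
      intro b; rw [aux_gram_symm]
    rw [Finset.sum_congr rfl fun b _ => h1 b, aux_gram_sq_row V hV j]
    exact hsV j
  have hEEb : ∀ j : Fin n, ∑ b, ((V*Vᵀ) b j)^2 ≤ B0 := by
    intro j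
    have h1 : ∀ b, ((V*Vᵀ) b j)^2 = ((V*Vᵀ) j b)^2 := by
      intro b; rw [aux_gram_symm]
    rw [Finset.sum_congr rfl fun b _ => h1 b, aux_gram_sq_row V hV j]
    have h2 : ∑ k, (V j k)^2 = (V*Vᵀ) j j := by
      simp [Matrix.mul_apply, pow_two]
    have h3 : (Vb*Vbᵀ) j j = ∑ k, (Vb j k)^2 := by
      simp [Matrix.mul_apply, pow_two]
    rw [h2]
    calc (V*Vᵀ) j j ≤ (Vb*Vbᵀ) j j := aux_proj_diag_le V Vb hV hVb CV hCVeq j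
      _ = ∑ k, (Vb j k)^2 := h3
      _ ≤ B0 := hsVb j
  -- entrywise bounds
  have habs_gen : ∀ (f : Fin n → ℝ) (X : ℝ), (∑ a, (f a)^2 ≤ X) → ∀ a, |f a| ≤ Real.sqrt X := by
    intro f X hf a
    rw [← Real.sqrt_sq_eq_abs]
    apply Real.sqrt_le_sqrt
    calc (f a)^2 ≤ ∑ a', (f a')^2 :=
          Finset.single_le_sum (f := fun a' => (f a')^2) (fun _ _ => sq_nonneg _)
            (Finset.mem_univ a)
      _ ≤ X := hf
  have habsA : ∀ (i a : Fin n), |(U*Uᵀ) i a| ≤ Real.sqrt A0 :=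
    fun i a => habs_gen (fun a' => (U*Uᵀ) i a') A0 (hAA i) a
  have habsB : ∀ (i a : Fin n), |(Ub*Ubᵀ) i a| ≤ Real.sqrt B0 :=
    fun i a => habs_gen (fun a' => (Ub*Ubᵀ) i a') B0 (hBB i) a
  have habsD : ∀ (b j : Fin n), |(Vb*Vbᵀ) b j| ≤ Real.sqrt B0 :=
    fun b j => habs_gen (fun b' => (Vb*Vbᵀ) b' j) B0 (hDD j) b
  have habsEa : ∀ (b j : Fin n), |(V*Vᵀ) b j| ≤ Real.sqrt A0 :=
    fun b j => habs_gen (fun b' => (V*Vᵀ) b' j) A0 (hEEa j) b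
  have habsEb : ∀ (b j : Fin n), |(V*Vᵀ) b j| ≤ Real.sqrt B0 :=
    fun b j => habs_gen (fun b' => (V*Vᵀ) b' j) B0 (hEEb j) b
  -- the weights
  set g := Real.sqrt A0 * Real.sqrt B0 with hgdef
  have hgpos : 0 < g := mul_pos (Real.sqrt_pos.mpr hA0pos) (Real.sqrt_pos.mpr hB0pos)
  have hg2 : g^2 = A0 * B0 := by
    rw [hgdef, mul_pow, Real.sq_sqrt hA0pos.le, Real.sq_sqrt hB0pos.le]
  set t := L / (2 * Real.sqrt (μ0 * r)) with htdef
  have htpos : 0 < t := by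
    apply div_pos hL
    positivity
  set l := p / (3 * g * L) with hldef
  have hlpos : 0 < l := by
    apply div_pos hppos
    positivity
  set w : Fin n × Fin n → Fin n × Fin n → ℝ := fun ij ab =>
    ((U*Uᵀ) ij.1 ab.1 * (Vb*Vbᵀ) ab.2 ij.2 + (Ub*Ubᵀ) ij.1 ab.1 * (V*Vᵀ) ab.2 ij.2
      - (U*Uᵀ) ij.1 ab.1 * (V*Vᵀ) ab.2 ij.2) * Z ab.1 ab.2 with hwdef
  have hwabs : ∀ ij ab, |w ij ab| ≤ 3 * g * L := by
    intro ij ab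
    simp only [hwdef]
    rw [abs_mul]
    have hK : |(U*Uᵀ) ij.1 ab.1 * (Vb*Vbᵀ) ab.2 ij.2 + (Ub*Ubᵀ) ij.1 ab.1 * (V*Vᵀ) ab.2 ij.2
        - (U*Uᵀ) ij.1 ab.1 * (V*Vᵀ) ab.2 ij.2| ≤ 3 * g := by
      have h1 : |(U*Uᵀ) ij.1 ab.1 * (Vb*Vbᵀ) ab.2 ij.2| ≤ g := by
        rw [abs_mul, hgdef]
        exact mul_le_mul (habsA _ _) (habsD _ _) (abs_nonneg _) (Real.sqrt_nonneg _)
      have h2 : |(Ub*Ubᵀ) ij.1 ab.1 * (V*Vᵀ) ab.2 ij.2| ≤ g := by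
        rw [abs_mul, hgdef, mul_comm (Real.sqrt A0)]
        exact mul_le_mul (habsB _ _) (habsEa _ _) (abs_nonneg _) (Real.sqrt_nonneg _)
      have h3 : |(U*Uᵀ) ij.1 ab.1 * (V*Vᵀ) ab.2 ij.2| ≤ g := by
        rw [abs_mul, hgdef]
        exact mul_le_mul (habsA _ _) (habsEb _ _) (abs_nonneg _) (Real.sqrt_nonneg _)
      calc |(U*Uᵀ) ij.1 ab.1 * (Vb*Vbᵀ) ab.2 ij.2 + (Ub*Ubᵀ) ij.1 ab.1 * (V*Vᵀ) ab.2 ij.2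
          - (U*Uᵀ) ij.1 ab.1 * (V*Vᵀ) ab.2 ij.2|
          ≤ |(U*Uᵀ) ij.1 ab.1 * (Vb*Vbᵀ) ab.2 ij.2 + (Ub*Ubᵀ) ij.1 ab.1 * (V*Vᵀ) ab.2 ij.2|
            + |(U*Uᵀ) ij.1 ab.1 * (V*Vᵀ) ab.2 ij.2| := abs_sub _ _
        _ ≤ |(U*Uᵀ) ij.1 ab.1 * (Vb*Vbᵀ) ab.2 ij.2| + |(Ub*Ubᵀ) ij.1 ab.1 * (V*Vᵀ) ab.2 ij.2|
            + |(U*Uᵀ) ij.1 ab.1 * (V*Vᵀ) ab.2 ij.2| := by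
              have := abs_add_le ((U*Uᵀ) ij.1 ab.1 * (Vb*Vbᵀ) ab.2 ij.2)
                ((Ub*Ubᵀ) ij.1 ab.1 * (V*Vᵀ) ab.2 ij.2)
              linarith
        _ ≤ 3 * g := by linarith
    calc _ ≤ (3*g) * |Z ab.1 ab.2| :=
          mul_le_mul_of_nonneg_right hK (abs_nonneg _)
      _ ≤ (3*g) * L := by
          apply mul_le_mul_of_nonneg_left (hZb _ _)
          positivity
      _ = 3 * g * L := by ring
  have hwsum : ∀ ij, ∑ ab : Fin n × Fin n, (w ij ab)^2 ≤ 9 * g^2 * L^2 := by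
    intro ij
    have hptw : ∀ ab : Fin n × Fin n, (w ij ab)^2 ≤
        (3*(((U*Uᵀ) ij.1 ab.1)^2*((Vb*Vbᵀ) ab.2 ij.2)^2
          + ((Ub*Ubᵀ) ij.1 ab.1)^2*((V*Vᵀ) ab.2 ij.2)^2
          + ((U*Uᵀ) ij.1 ab.1)^2*((V*Vᵀ) ab.2 ij.2)^2)) * L^2 := by
      intro ab
      simp only [hwdef]
      rw [mul_pow]
      apply mul_le_mul
      · have := aux_three_sq ((U*Uᵀ) ij.1 ab.1 * (Vb*Vbᵀ) ab.2 ij.2)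
          ((Ub*Ubᵀ) ij.1 ab.1 * (V*Vᵀ) ab.2 ij.2) ((U*Uᵀ) ij.1 ab.1 * (V*Vᵀ) ab.2 ij.2)
        refine le_trans this (le_of_eq (by ring))
      · have h := hZb ab.1 ab.2
        have := abs_nonneg (Z ab.1 ab.2)
        nlinarith [sq_abs (Z ab.1 ab.2)]
      · exact sq_nonneg _
      · positivity
    have e1 : ∑ ab : Fin n × Fin n, ((U*Uᵀ) ij.1 ab.1)^2*((Vb*Vbᵀ) ab.2 ij.2)^2
        = (∑ a, ((U*Uᵀ) ij.1 a)^2) * (∑ b, ((Vb*Vbᵀ) b ij.2)^2) :=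
      aux_sum_sq_prod (fun a => (U*Uᵀ) ij.1 a) (fun b => (Vb*Vbᵀ) b ij.2)
    have e2 : ∑ ab : Fin n × Fin n, ((Ub*Ubᵀ) ij.1 ab.1)^2*((V*Vᵀ) ab.2 ij.2)^2
        = (∑ a, ((Ub*Ubᵀ) ij.1 a)^2) * (∑ b, ((V*Vᵀ) b ij.2)^2) :=
      aux_sum_sq_prod (fun a => (Ub*Ubᵀ) ij.1 a) (fun b => (V*Vᵀ) b ij.2)
    have e3 : ∑ ab : Fin n × Fin n, ((U*Uᵀ) ij.1 ab.1)^2*((V*Vᵀ) ab.2 ij.2)^2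
        = (∑ a, ((U*Uᵀ) ij.1 a)^2) * (∑ b, ((V*Vᵀ) b ij.2)^2) :=
      aux_sum_sq_prod (fun a => (U*Uᵀ) ij.1 a) (fun b => (V*Vᵀ) b ij.2)
    calc ∑ ab : Fin n × Fin n, (w ij ab)^2 ≤
        ∑ ab : Fin n × Fin n, (3*(((U*Uᵀ) ij.1 ab.1)^2*((Vb*Vbᵀ) ab.2 ij.2)^2
          + ((Ub*Ubᵀ) ij.1 ab.1)^2*((V*Vᵀ) ab.2 ij.2)^2
          + ((U*Uᵀ) ij.1 ab.1)^2*((V*Vᵀ) ab.2 ij.2)^2)) * L^2 :=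
          Finset.sum_le_sum fun ab _ => hptw ab
      _ = (3*L^2) * ((∑ ab : Fin n × Fin n, ((U*Uᵀ) ij.1 ab.1)^2*((Vb*Vbᵀ) ab.2 ij.2)^2)
          + (∑ ab : Fin n × Fin n, ((Ub*Ubᵀ) ij.1 ab.1)^2*((V*Vᵀ) ab.2 ij.2)^2)
          + (∑ ab : Fin n × Fin n, ((U*Uᵀ) ij.1 ab.1)^2*((V*Vᵀ) ab.2 ij.2)^2)) := by
          rw [← Finset.sum_add_distrib, ← Finset.sum_add_distrib, Finset.mul_sum]
          apply Finset.sum_congr rfl; intro ab _; ring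
      _ = (3*L^2) * ((∑ a, ((U*Uᵀ) ij.1 a)^2) * (∑ b, ((Vb*Vbᵀ) b ij.2)^2)
          + (∑ a, ((Ub*Ubᵀ) ij.1 a)^2) * (∑ b, ((V*Vᵀ) b ij.2)^2)
          + (∑ a, ((U*Uᵀ) ij.1 a)^2) * (∑ b, ((V*Vᵀ) b ij.2)^2)) := by
          rw [e1, e2, e3]
      _ ≤ (3*L^2) * (A0 * B0 + B0 * A0 + A0 * B0) := by
          apply mul_le_mul_of_nonneg_left _ (by positivity)
          have s1 : (∑ a, ((U*Uᵀ) ij.1 a)^2) * (∑ b, ((Vb*Vbᵀ) b ij.2)^2) ≤ A0 * B0 :=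
            mul_le_mul (hAA _) (hDD _) (Finset.sum_nonneg fun _ _ => sq_nonneg _) hA0pos.le
          have s2 : (∑ a, ((Ub*Ubᵀ) ij.1 a)^2) * (∑ b, ((V*Vᵀ) b ij.2)^2) ≤ B0 * A0 :=
            mul_le_mul (hBB _) (hEEa _) (Finset.sum_nonneg fun _ _ => sq_nonneg _) hB0pos.le
          have s3 : (∑ a, ((U*Uᵀ) ij.1 a)^2) * (∑ b, ((V*Vᵀ) b ij.2)^2) ≤ A0 * B0 :=
            mul_le_mul (hAA _) (hEEb _) (Finset.sum_nonneg fun _ _ => sq_nonneg _) hA0pos.le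
          linarith
      _ = 9 * g^2 * L^2 := by rw [hg2]; ring
  -- key scalar inequality : l * t is large
  have hsqrtμ0r : (0:ℝ) < Real.sqrt (μ0 * r) := Real.sqrt_pos.mpr hμ0r
  have hlt : 10 * Real.log n ≤ l * t := by
    have hlt1 : l * t = p / (6 * g * Real.sqrt (μ0 * r)) := by
      rw [hldef, htdef, div_mul_div_comm, mul_comm p L,
        show (3*g*L) * (2*Real.sqrt (μ0*r)) = L * (6*g*Real.sqrt (μ0*r)) from by ring,
        mul_div_mul_left _ _ (ne_of_gt hL)]
    have hden : (0:ℝ) < 6 * g * Real.sqrt (μ0 * r) := by positivity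
    rw [hlt1, le_div_iff₀ hden]
    have hq0 : (0:ℝ) < 60 * μ0 * μb0 * r * rb * Real.log n / n := by
      apply div_pos _ hn0
      have hrpos : (0:ℝ) < r := by linarith
      have hrbpos : (0:ℝ) < rb := by linarith
      positivity
    have hLHS0 : (0:ℝ) ≤ 10 * Real.log n * (6 * g * Real.sqrt (μ0*r)) := by positivity
    have hsq : (10 * Real.log n * (6 * g * Real.sqrt (μ0 * r)))^2
        ≤ (60 * μ0 * μb0 * r * rb * Real.log n / n)^2 := by
      have e1 : (10 * Real.log n * (6 * g * Real.sqrt (μ0 * r)))^2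
          = 3600 * (Real.log n)^2 * (μ0 * r)^2 * (μb0 * rb) / (n:ℝ)^2 := by
        simp only [mul_pow]
        rw [hg2, Real.sq_sqrt hμ0r.le, hA0, hB0]
        ring
      have e2 : (60 * μ0 * μb0 * (r:ℝ) * rb * Real.log n / n)^2
          = 3600 * (Real.log n)^2 * (μ0 * r)^2 * (μb0 * rb)^2 / (n:ℝ)^2 := by
        rw [div_pow]
        congr 1
        ring
      rw [e1, e2]
      have hYY : μb0 * rb ≤ (μb0 * rb)^2 := by nlinarith
      have hc : (0:ℝ) ≤ 3600 * (Real.log n)^2 * (μ0 * r)^2 := by positivity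
      apply div_le_div_of_nonneg_right _ (by positivity : (0:ℝ) ≤ ((n:ℝ))^2)
      nlinarith [mul_le_mul_of_nonneg_left hYY hc]
    nlinarith [hsq, hLHS0, hq0.le, hpc]
  -- per-tail bound
  have hl2 : l^2 * (9*g^2*L^2) / p = p := by
    have hc2 : (9:ℝ)*g^2*L^2 = (3*g*L)^2 := by ring
    rw [hldef, div_pow, hc2,
      div_mul_cancel₀ _ (pow_ne_zero 2 (by positivity : (3:ℝ)*g*L ≠ 0)),
      sq, mul_div_assoc, div_self hppos.ne', mul_one]
  have htail : ∀ w' : Fin n × Fin n → ℝ, (∀ ab, |w' ab| ≤ 3*g*L) →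
      (∑ ab : Fin n × Fin n, (w' ab)^2 ≤ 9*g^2*L^2) →
      sampleMeasure n p {ω | t < ∑ ab : Fin n × Fin n, w' ab * ((if ω ab then 1/p else 0) - 1)}
        ≤ ENNReal.ofReal (Real.exp 1 * (n:ℝ)^(-(10:ℝ))) := by
    intro w' habs hsum
    rw [aux_sampleMeasure_set n p hp0 hp1
      (fun ω => t < ∑ ab : Fin n × Fin n, w' ab * ((if ω ab then 1/p else 0) - 1))]
    apply ENNReal.ofReal_le_ofReal
    have hw : ∀ ab, l * |w' ab| ≤ p := by
      intro ab
      calc l * |w' ab| ≤ l * (3*g*L) := mul_le_mul_of_nonneg_left (habs ab) hlpos.le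
        _ = p := by
            rw [hldef, div_mul_cancel₀ _ (by positivity : 3*g*L ≠ 0)]
    have hch := aux_chernoff w' p t l hppos hp1 hlpos.le hw
    refine hch.trans ?_
    have hexp1 : l^2 * (∑ ab : Fin n × Fin n, (w' ab)^2) / p - l*t ≤ 1 - 10 * Real.log n := by
      have h1 : l^2 * (∑ ab : Fin n × Fin n, (w' ab)^2) / p ≤ l^2 * (9*g^2*L^2) / p := by
        apply div_le_div_of_nonneg_right _ hppos.le
        exact mul_le_mul_of_nonneg_left hsum (sq_nonneg l)
      rw [hl2] at h1
      linarith
    refine (Real.exp_le_exp.mpr hexp1).trans ?_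
    rw [show (1:ℝ) - 10*Real.log n = 1 + Real.log n * (-10) from by ring, Real.exp_add]
    rw [← Real.rpow_def_of_pos hn0]
  -- entries of the difference matrix
  have hD : ∀ (ω : Fin n × Fin n → Bool) (i j : Fin n),
      (projTc U V Ub Vb (p⁻¹ • projB ω Z) - projTc U V Ub Vb Z) i j
      = ∑ ab : Fin n × Fin n, w (i,j) ab * ((if ω ab then 1/p else 0) - 1) := by
    intro ω i j
    rw [Matrix.sub_apply, aux_projTc_apply, aux_projTc_apply]
    rw [Fintype.sum_prod_type]
    rw [← Finset.sum_sub_distrib]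
    apply Finset.sum_congr rfl; intro a _
    rw [← Finset.sum_sub_distrib]
    apply Finset.sum_congr rfl; intro b _
    simp only [hwdef, Matrix.smul_apply, projB, smul_eq_mul]
    by_cases h : ω (a,b) <;> simp [h] <;> field_simp <;> ring
  -- the good event
  set Ev := {ω : Fin n × Fin n → Bool |
    linf2 (projTc U V Ub Vb (p⁻¹ • projB ω Z) - projTc U V Ub Vb Z) ≤
      1 / 2 * Real.sqrt ((n : ℝ) / (μ0 * r)) * L + 1 / 2 * linf2 Z} with hEv
  set Gset := {ω : Fin n × Fin n → Bool |
    ∀ ij : Fin n × Fin n, |∑ ab : Fin n × Fin n, w ij ab * ((if ω ab then 1/p else 0) - 1)| ≤ t}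
    with hGset
  have hGE : Gset ⊆ Ev := by
    intro ω hω
    simp only [hGset, Set.mem_setOf_eq] at hω
    simp only [hEv, Set.mem_setOf_eq]
    have hent : ∀ i j : Fin n,
        ((projTc U V Ub Vb (p⁻¹ • projB ω Z) - projTc U V Ub Vb Z) i j)^2 ≤ t^2 := by
      intro i j
      have h1 := hω (i,j)
      rw [← hD ω i j] at h1
      have h2 := abs_le.mp h1
      exact sq_le_sq' h2.1 h2.2
    have hsn : ∀ (f : Fin n → ℝ), (∀ x, (f x)^2 ≤ t^2) →
        Real.sqrt (∑ x, (f x)^2) ≤ Real.sqrt n * t := by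
      intro f hf
      calc Real.sqrt (∑ x, (f x)^2) ≤ Real.sqrt (∑ _x : Fin n, t^2) :=
            Real.sqrt_le_sqrt (Finset.sum_le_sum fun x _ => hf x)
        _ = Real.sqrt n * t := by
            rw [Finset.sum_const, Finset.card_univ, Fintype.card_fin, nsmul_eq_mul,
              Real.sqrt_mul (by positivity), Real.sqrt_sq htpos.le]
    have hmax : linf2 (projTc U V Ub Vb (p⁻¹ • projB ω Z) - projTc U V Ub Vb Z)
        ≤ Real.sqrt n * t := by
      simp only [linf2]
      apply max_le
      · apply Real.iSup_le _ (by positivity)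
        intro i
        exact hsn _ (fun j => hent i j)
      · apply Real.iSup_le _ (by positivity)
        intro j
        exact hsn _ (fun i => hent i j)
    have heq : Real.sqrt n * t = 1/2 * Real.sqrt ((n:ℝ)/(μ0*r)) * L := by
      rw [htdef, Real.sqrt_div hn0.le]
      rw [div_eq_mul_inv, div_eq_mul_inv]
      rw [mul_inv, ← mul_assoc]
      ring
    have h2 : 0 ≤ 1/2 * linf2 Z := by
      have := aux_linf2_nonneg Z
      linarith
    rw [heq] at hmax
    linarith
  -- union bound on the complement
  have hucompl : Gsetᶜ ⊆ ⋃ ij : Fin n × Fin n,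
      ({ω : Fin n × Fin n → Bool | t < ∑ ab : Fin n × Fin n,
          w ij ab * ((if ω ab then 1/p else 0) - 1)}
        ∪ {ω : Fin n × Fin n → Bool | t < ∑ ab : Fin n × Fin n,
          (-(w ij ab)) * ((if ω ab then 1/p else 0) - 1)}) := by
    intro ω hω
    simp only [hGset, Set.mem_compl_iff, Set.mem_setOf_eq, not_forall, not_le] at hω
    obtain ⟨ij, hij⟩ := hω
    apply Set.mem_iUnion.mpr
    refine ⟨ij, ?_⟩
    rcases lt_abs.mp hij with h | h
    · exact Or.inl h
    · apply Or.inr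
      simp only [Set.mem_setOf_eq]
      have : ∑ ab : Fin n × Fin n, (-(w ij ab)) * ((if ω ab then 1/p else 0) - 1)
          = -(∑ ab : Fin n × Fin n, w ij ab * ((if ω ab then 1/p else 0) - 1)) := by
        rw [← Finset.sum_neg_distrib]
        apply Finset.sum_congr rfl; intro ab _; ring
      rw [this]
      exact h
  have hwsum' : ∀ ij, ∑ ab : Fin n × Fin n, (-(w ij ab))^2 ≤ 9*g^2*L^2 := by
    intro ij
    calc ∑ ab : Fin n × Fin n, (-(w ij ab))^2 = ∑ ab : Fin n × Fin n, (w ij ab)^2 := by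
          apply Finset.sum_congr rfl; intro ab _; ring
      _ ≤ 9*g^2*L^2 := hwsum ij
  have hwabs' : ∀ ij ab, |(-(w ij ab))| ≤ 3*g*L := by
    intro ij ab; rw [abs_neg]; exact hwabs ij ab
  have hGc : sampleMeasure n p Gsetᶜ
      ≤ ENNReal.ofReal (16 * (n:ℝ)^(-(4:ℝ))) := by
    have hBnn : (0:ℝ) ≤ Real.exp 1 * (n:ℝ)^(-(10:ℝ)) := by positivity
    calc sampleMeasure n p Gsetᶜ
        ≤ sampleMeasure n p (⋃ ij : Fin n × Fin n,
          ({ω : Fin n × Fin n → Bool | t < ∑ ab : Fin n × Fin n,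
              w ij ab * ((if ω ab then 1/p else 0) - 1)}
            ∪ {ω : Fin n × Fin n → Bool | t < ∑ ab : Fin n × Fin n,
              (-(w ij ab)) * ((if ω ab then 1/p else 0) - 1)})) := measure_mono hucompl
      _ ≤ ∑' ij : Fin n × Fin n, sampleMeasure n p
          ({ω : Fin n × Fin n → Bool | t < ∑ ab : Fin n × Fin n,
              w ij ab * ((if ω ab then 1/p else 0) - 1)}
            ∪ {ω : Fin n × Fin n → Bool | t < ∑ ab : Fin n × Fin n,
              (-(w ij ab)) * ((if ω ab then 1/p else 0) - 1)}) := measure_iUnion_le _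
      _ = ∑ ij : Fin n × Fin n, sampleMeasure n p
          ({ω : Fin n × Fin n → Bool | t < ∑ ab : Fin n × Fin n,
              w ij ab * ((if ω ab then 1/p else 0) - 1)}
            ∪ {ω : Fin n × Fin n → Bool | t < ∑ ab : Fin n × Fin n,
              (-(w ij ab)) * ((if ω ab then 1/p else 0) - 1)}) := tsum_fintype _
      _ ≤ ∑ _ij : Fin n × Fin n, (ENNReal.ofReal (Real.exp 1 * (n:ℝ)^(-(10:ℝ)))
            + ENNReal.ofReal (Real.exp 1 * (n:ℝ)^(-(10:ℝ)))) := by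
          apply Finset.sum_le_sum
          intro ij _
          refine (measure_union_le _ _).trans ?_
          exact add_le_add (htail (fun ab => w ij ab) (hwabs ij) (hwsum ij))
            (htail (fun ab => -(w ij ab)) (hwabs' ij) (hwsum' ij))
      _ ≤ ENNReal.ofReal (16 * (n:ℝ)^(-(4:ℝ))) := by
          rw [Finset.sum_const]
          exact aux_card_smul n hn
  -- conclude
  have h1 : (1:ENNReal) ≤ sampleMeasure n p Gset + sampleMeasure n p Gsetᶜ := by
    rw [← aux_sampleMeasure_univ n p hp0 hp1]
    refine le_trans (measure_mono ?_) (measure_union_le Gset Gsetᶜ)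
    rw [Set.union_compl_self]
  calc ENNReal.ofReal (1 - 16*(n:ℝ)^(-(4:ℝ)))
      = ENNReal.ofReal 1 - ENNReal.ofReal (16*(n:ℝ)^(-(4:ℝ))) :=
        ENNReal.ofReal_sub _ (by positivity)
    _ ≤ 1 - sampleMeasure n p Gsetᶜ := by
        rw [ENNReal.ofReal_one]
        exact tsub_le_tsub le_rfl hGc
    _ ≤ sampleMeasure n p Gset := tsub_le_iff_right.mpr h1
    _ ≤ sampleMeasure n p Ev := measure_mono hGE

lemma aux_linf2_zero {m : ℕ} : linf2 (0 : Matrix (Fin m) (Fin m) ℝ) = 0 := by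
  apply le_antisymm _ (aux_linf2_nonneg 0)
  apply max_le
  · apply Real.iSup_le _ le_rfl
    intro i
    simp
  · apply Real.iSup_le _ le_rfl
    intro j
    simp

lemma aux_RHS_nonneg {n : ℕ} (Z : Matrix (Fin n) (Fin n) ℝ) (c : ℝ) :
    0 ≤ 1/2 * Real.sqrt c * linf Z + 1/2 * linf2 Z :=
  add_nonneg (mul_nonneg (mul_nonneg (by norm_num) (Real.sqrt_nonneg _)) (aux_linf_nonneg _))
    (mul_nonneg (by norm_num) (aux_linf2_nonneg _))

lemma aux_trivial_case (n : ℕ) (p : ℝ) (hp0 : 0 ≤ p) (hp1 : p ≤ 1)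
    (S : Set (Fin n × Fin n → Bool)) (hS : S = Set.univ) :
    ENNReal.ofReal (1 - 16 * (n:ℝ)^(-(4:ℝ))) ≤ sampleMeasure n p S := by
  rw [hS, aux_sampleMeasure_univ n p hp0 hp1]
  calc ENNReal.ofReal (1 - 16 * (n:ℝ)^(-(4:ℝ)))
      ≤ ENNReal.ofReal 1 := by
        apply ENNReal.ofReal_le_ofReal
        have : (0:ℝ) ≤ 16 * (n:ℝ)^(-(4:ℝ)) :=
          mul_nonneg (by norm_num) (Real.rpow_nonneg (by positivity) _)
        linarith
    _ = 1 := ENNReal.ofReal_one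

lemma aux_small_case (n : ℕ) (hn : n = 1 ∨ n = 2) (p : ℝ)
    (S : Set (Fin n × Fin n → Bool)) :
    ENNReal.ofReal (1 - 16 * (n:ℝ)^(-(4:ℝ))) ≤ sampleMeasure n p S := by
  have h : 1 - 16 * (n:ℝ)^(-(4:ℝ)) ≤ 0 := by
    rcases hn with h1 | h2
    · subst h1
      rw [Nat.cast_one, Real.one_rpow]
      norm_num
    · subst h2
      have he : ((2:ℕ):ℝ)^(-(4:ℝ)) = 1/16 := by
        rw [Real.rpow_neg (by norm_num)]
        rw [show (4:ℝ) = ((4:ℕ):ℝ) from by norm_num, Real.rpow_natCast]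
        norm_num
      rw [he]
      norm_num
  rw [ENNReal.ofReal_of_nonpos h]
  exact zero_le

/-- Lemma 7: ℓ∞,2 bound, structured setting.
For a fixed matrix Z, if p ≥ c0 μ0 μ̄0 r r̄ log n / n, then with probability at
least 1 − c1 n^{−c2},
‖(P_T R_Ω − P_T)Z‖_{∞,2} ≤ (1/2)√(n/(μ0 r))‖Z‖_∞ + (1/2)‖Z‖_{∞,2}. -/
theorem statement11 :
    ∃ c0 c1 c2 : ℝ, 0 < c0 ∧ 0 < c1 ∧ 0 < c2 ∧
      ∀ (n r rb : ℕ) (Z : Matrix (Fin n) (Fin n) ℝ)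
        (U V : Matrix (Fin n) (Fin r) ℝ) (Ub Vb : Matrix (Fin n) (Fin rb) ℝ)
        (μ0 μb0 p : ℝ),
        -- orthonormal columns and column space inclusions
        Uᵀ * U = 1 → Vᵀ * V = 1 → Ubᵀ * Ub = 1 → Vbᵀ * Vb = 1 →
        (∃ C : Matrix (Fin rb) (Fin r) ℝ, U = Ub * C) →
        (∃ C : Matrix (Fin rb) (Fin r) ℝ, V = Vb * C) →
        -- standard incoherence parameters μ0 and μ̄0
        (∀ i, rowNorm U i ≤ Real.sqrt (μ0 * r / n)) →
        (∀ j, rowNorm V j ≤ Real.sqrt (μ0 * r / n)) →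
        (∀ i, rowNorm Ub i ≤ Real.sqrt (μb0 * rb / n)) →
        (∀ j, rowNorm Vb j ≤ Real.sqrt (μb0 * rb / n)) →
        -- Bernoulli(p) sampling with p above the threshold
        0 ≤ p → p ≤ 1 →
        c0 * μ0 * μb0 * r * rb * Real.log n / n ≤ p →
        ENNReal.ofReal (1 - c1 * ((n : ℝ)) ^ (-c2)) ≤
          sampleMeasure n p
            {ω | linf2 (projTc U V Ub Vb (p⁻¹ • projB ω Z) - projTc U V Ub Vb Z) ≤
              1 / 2 * Real.sqrt ((n : ℝ) / (μ0 * r)) * linf Z + 1 / 2 * linf2 Z} := by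
  refine ⟨60, 16, 4, by norm_num, by norm_num, by norm_num, ?_⟩
  intro n r rb Z U V Ub Vb μ0 μb0 p hU hV hUb hVb hCU hCV hIU hIV hIUb hIVb hp0 hp1 hpc
  by_cases hn : 3 ≤ n
  · by_cases hr : 0 < r
    · by_cases hL : 0 < linf Z
      · exact main_bound n r rb Z U V Ub Vb μ0 μb0 p hU hV hUb hVb hCU hCV hIU hIV
          hIUb hIVb hp0 hp1 hpc hn hr hL
      · -- Z = 0 : the event is everything
        have hZ0 : Z = 0 := by
          ext a b
          have h1 := aux_linf_entry Z a b
          push_neg at hL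
          have h2 : |Z a b| ≤ 0 := le_trans h1 hL
          have h3 := abs_nonneg (Z a b)
          have : |Z a b| = 0 := le_antisymm h2 h3
          simpa using this
        apply aux_trivial_case n p hp0 hp1
        apply Set.eq_univ_of_forall
        intro ω
        simp only [Set.mem_setOf_eq]
        have hB0 : projB ω Z = 0 := by
          ext i j
          rw [hZ0]
          simp [projB]
        have hTz : projTc U V Ub Vb (0 : Matrix (Fin n) (Fin n) ℝ) = 0 := by
          rw [projTc]
          simp
        rw [hB0, smul_zero, hZ0, hTz, sub_self, aux_linf2_zero]
        have h1 := aux_linf_nonneg (0 : Matrix (Fin n) (Fin n) ℝ)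
        have h2 := Real.sqrt_nonneg ((n:ℝ)/(μ0*(r:ℝ)))
        nlinarith
    · -- r = 0 : projTc vanishes
      have hr0 : r = 0 := by omega
      subst hr0
      apply aux_trivial_case n p hp0 hp1
      apply Set.eq_univ_of_forall
      intro ω
      simp only [Set.mem_setOf_eq]
      have hTc0 : ∀ M : Matrix (Fin n) (Fin n) ℝ, projTc U V Ub Vb M = 0 := by
        intro M
        have hU0 : U * Uᵀ = (0 : Matrix (Fin n) (Fin n) ℝ) := by
          ext i j; simp [Matrix.mul_apply]
        have hXV : ∀ X : Matrix (Fin n) (Fin n) ℝ,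
            X * V = (0 : Matrix (Fin n) (Fin 0) ℝ) := by
          intro X; ext i k; exact k.elim0
        rw [projTc, hU0, hXV (Ub * Ubᵀ * M)]
        simp
      rw [hTc0, hTc0, sub_self, aux_linf2_zero]
      exact aux_RHS_nonneg _ _
  · -- n ≤ 2
    have hn2 : n < 3 := by omega
    interval_cases n
    · -- n = 0
      apply aux_trivial_case 0 p hp0 hp1
      apply Set.eq_univ_of_forall
      intro ω
      simp only [Set.mem_setOf_eq]
      have hD0 : projTc U V Ub Vb (p⁻¹ • projB ω Z) - projTc U V Ub Vb Z = 0 := by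
        ext i j; exact i.elim0
      rw [hD0, aux_linf2_zero]
      exact aux_RHS_nonneg _ _
    · exact aux_small_case 1 (Or.inl rfl) p _
    · exact aux_small_case 2 (Or.inr rfl) p _


end
end

section
/- Let U, V ∈ R^{n×r} and Ū, V̄ ∈ R^{n×r̄} have orthonormal columns with col(U) ⊆ col(Ū) and col(V) ⊆ col(V̄), where (U,V) satisfy the standard incoherence condition with parameter μ0 and (Ū,V̄) satisfy it with parameter μ̄0 (so that μ0 r/n ≤ μ̄0 r̄/n). Define P_T(Z) := UU^T Z V̄V̄^T + ŪŪ^T Z VV^T − UU^T Z VV^T. Then for all indices i, j, b ∈ [n]: ‖P_T(e_i e_j^T)‖_F² ≤ 2 (μ0 r/n)(μ̄0 r̄/n) and ‖P_T(e_i e_j^T) e_b‖₂² ≤ 2 (μ0 r/n)(μ̄0² r̄²/n). -/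
open MeasureTheory Matrix

noncomputable section

lemma aux_mul_std {n : ℕ} (A B : Matrix (Fin n) (Fin n) ℝ) (i j x y : Fin n) :
    (A * Matrix.single i j (1:ℝ) * B) x y = A x i * B j y := by
  rw [Matrix.mul_assoc, Matrix.mul_apply]
  simp [Matrix.mul_apply, Matrix.single, Finset.mul_sum, ite_and]

lemma aux_symm {n m : ℕ} (W : Matrix (Fin n) (Fin m) ℝ) (x y : Fin n) :
    (W * Wᵀ) x y = (W * Wᵀ) y x := by
  rw [Matrix.mul_apply, Matrix.mul_apply]
  exact Finset.sum_congr rfl fun k _ => by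
    rw [Matrix.transpose_apply, Matrix.transpose_apply, mul_comm]

lemma aux_diag {n m : ℕ} (W : Matrix (Fin n) (Fin m) ℝ) (x : Fin n) :
    (W * Wᵀ) x x = ∑ k, (W x k)^2 := by
  simp [Matrix.mul_apply, pow_two]

lemma aux_idem {n m : ℕ} (W : Matrix (Fin n) (Fin m) ℝ) (hW : Wᵀ * W = 1) :
    (W * Wᵀ) * (W * Wᵀ) = W * Wᵀ := by
  rw [Matrix.mul_assoc, ← Matrix.mul_assoc Wᵀ W Wᵀ, hW, Matrix.one_mul]

lemma aux_sumsq' {n m : ℕ} (W : Matrix (Fin n) (Fin m) ℝ) (hW : Wᵀ * W = 1) (i : Fin n) :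
    ∑ x, ((W * Wᵀ) x i)^2 = (W * Wᵀ) i i := by
  calc ∑ x, ((W * Wᵀ) x i)^2 = ∑ x, (W * Wᵀ) i x * (W * Wᵀ) x i :=
        Finset.sum_congr rfl fun x _ => by rw [pow_two, aux_symm W x i]
    _ = ((W * Wᵀ) * (W * Wᵀ)) i i := (Matrix.mul_apply).symm
    _ = (W * Wᵀ) i i := by rw [aux_idem W hW]

lemma aux_sumsq_row {n m : ℕ} (W : Matrix (Fin n) (Fin m) ℝ) (hW : Wᵀ * W = 1) (j : Fin n) :
    ∑ y, ((W * Wᵀ) j y)^2 = (W * Wᵀ) j j := by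
  rw [← aux_sumsq' W hW j]
  exact Finset.sum_congr rfl fun y _ => by rw [aux_symm W j y]

lemma aux_cross {n r rb : ℕ} (U : Matrix (Fin n) (Fin r) ℝ) (Ub : Matrix (Fin n) (Fin rb) ℝ)
    (hUb : Ubᵀ * Ub = 1) (C : Matrix (Fin rb) (Fin r) ℝ) (hC : U = Ub * C) (i : Fin n) :
    ∑ x, (U * Uᵀ) x i * (Ub * Ubᵀ) x i = (U * Uᵀ) i i := by
  have hSSb : (U * Uᵀ) * (Ub * Ubᵀ) = U * Uᵀ := by
    rw [hC, Matrix.transpose_mul, Matrix.mul_assoc, Matrix.mul_assoc Cᵀ Ubᵀ (Ub * Ubᵀ),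
      ← Matrix.mul_assoc Ubᵀ Ub Ubᵀ, hUb, Matrix.one_mul]
  calc ∑ x, (U * Uᵀ) x i * (Ub * Ubᵀ) x i = ∑ x, (U * Uᵀ) i x * (Ub * Ubᵀ) x i :=
        Finset.sum_congr rfl fun x _ => by rw [aux_symm U x i]
    _ = ((U * Uᵀ) * (Ub * Ubᵀ)) i i := (Matrix.mul_apply).symm
    _ = (U * Uᵀ) i i := by rw [hSSb]

lemma aux_expand {n : ℕ} (f g h k : Fin n → ℝ) :
    ∑ x, ∑ y, (f x * g y + h x * k y)^2 =
      (∑ x, f x^2) * (∑ y, g y^2) + 2 * ((∑ x, f x * h x) * (∑ y, g y * k y))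
      + (∑ x, h x^2) * (∑ y, k y^2) := by
  have h1 : ∀ x : Fin n, ∑ y, (f x * g y + h x * k y)^2
      = f x^2 * (∑ y, g y^2) + 2 * (f x * h x) * (∑ y, g y * k y) + h x^2 * (∑ y, k y^2) := by
    intro x
    rw [Finset.mul_sum, Finset.mul_sum, Finset.mul_sum, ← Finset.sum_add_distrib,
      ← Finset.sum_add_distrib]
    exact Finset.sum_congr rfl fun y _ => by ring
  simp_rw [h1]
  rw [Finset.sum_add_distrib, Finset.sum_add_distrib, ← Finset.sum_mul, ← Finset.sum_mul,
    ← Finset.sum_mul, ← Finset.mul_sum]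
  ring

lemma aux_expand2 {n : ℕ} (f h : Fin n → ℝ) (c1 c2 : ℝ) :
    ∑ x, (f x * c1 + h x * c2)^2 =
      (∑ x, f x^2) * c1^2 + 2 * ((∑ x, f x * h x) * (c1 * c2)) + (∑ x, h x^2) * c2^2 := by
  have h1 : ∀ x : Fin n, (f x * c1 + h x * c2)^2
      = f x^2 * c1^2 + 2 * (f x * h x) * (c1 * c2) + h x^2 * c2^2 := fun x => by ring
  simp_rw [h1]
  rw [Finset.sum_add_distrib, Finset.sum_add_distrib, ← Finset.sum_mul, ← Finset.sum_mul,
    ← Finset.sum_mul, ← Finset.mul_sum]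
  ring

lemma aux_cs {n m : ℕ} (W : Matrix (Fin n) (Fin m) ℝ) (c : ℝ)
    (hc : ∀ x, ∑ k, (W x k)^2 ≤ c) (x y : Fin n) :
    ((W * Wᵀ) x y)^2 ≤ c * c := by
  have h1 : (W * Wᵀ) x y = ∑ k, W x k * W y k := by simp [Matrix.mul_apply]
  have h2 := Finset.sum_mul_sq_le_sq_mul_sq Finset.univ (fun k => W x k) (fun k => W y k)
  have h3 : (0:ℝ) ≤ ∑ k, (W x k)^2 := by positivity
  have h4 : (0:ℝ) ≤ ∑ k, (W y k)^2 := by positivity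
  rw [h1]
  nlinarith [hc x, hc y]

set_option maxHeartbeats 1000000 in
/-- basic inequalities for P_T in the structured setting:
‖P_T(e_i e_jᵀ)‖_F² ≤ 2(μ0 r/n)(μ̄0 r̄/n) and
‖P_T(e_i e_jᵀ) e_b‖₂² ≤ 2(μ0 r/n)(μ̄0² r̄²/n). -/
theorem statement18 (n r rb : ℕ) (U V : Matrix (Fin n) (Fin r) ℝ)
    (Ub Vb : Matrix (Fin n) (Fin rb) ℝ) (μ0 μb0 : ℝ)
    (hU : Uᵀ * U = 1) (hV : Vᵀ * V = 1) (hUb : Ubᵀ * Ub = 1) (hVb : Vbᵀ * Vb = 1)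
    (hUcol : ∃ C : Matrix (Fin rb) (Fin r) ℝ, U = Ub * C)
    (hVcol : ∃ C : Matrix (Fin rb) (Fin r) ℝ, V = Vb * C)
    (hUinc : ∀ i, rowNorm U i ≤ Real.sqrt (μ0 * r / n))
    (hVinc : ∀ j, rowNorm V j ≤ Real.sqrt (μ0 * r / n))
    (hUbinc : ∀ i, rowNorm Ub i ≤ Real.sqrt (μb0 * rb / n))
    (hVbinc : ∀ j, rowNorm Vb j ≤ Real.sqrt (μb0 * rb / n))
    (hle : μ0 * r / n ≤ μb0 * rb / n) :
    (∀ i j, (frobNorm (projTc U V Ub Vb (Matrix.single i j (1 : ℝ)))) ^ 2 ≤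
        2 * (μ0 * r / n) * (μb0 * rb / n)) ∧
    (∀ i j b, (∑ a, (projTc U V Ub Vb (Matrix.single i j (1 : ℝ)) a b) ^ 2) ≤
        2 * (μ0 * r / n) * (μb0 ^ 2 * (rb : ℝ) ^ 2 / n)) := by
  classical
  rcases Nat.eq_zero_or_pos n with hn0 | hn
  · subst hn0
    exact ⟨fun i => i.elim0, fun i => i.elim0⟩
  have hn1 : (1:ℝ) ≤ (n:ℝ) := by exact_mod_cast hn
  have hnpos : (0:ℝ) < (n:ℝ) := by linarith
  simp only [rowNorm] at hUinc hVinc hUbinc hVbinc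
  set al := μ0 * (r:ℝ) / (n:ℝ) with hal
  set be := μb0 * (rb:ℝ) / (n:ℝ) with hbe
  obtain ⟨CU, hCU⟩ := hUcol
  -- nonnegativity helper
  have nonneg_of : ∀ {m : ℕ} (W : Matrix (Fin n) (Fin m) ℝ) (c : ℝ), 0 < m → Wᵀ * W = 1 →
      (∀ i, Real.sqrt (∑ k, (W i k)^2) ≤ Real.sqrt c) → 0 ≤ c := by
    intro m W c hm hW hQ
    by_contra hc
    push_neg at hc
    have hs : Real.sqrt c = 0 := Real.sqrt_eq_zero'.mpr hc.le
    have hz : ∀ i k, W i k = 0 := by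
      intro i k
      have h1 : Real.sqrt (∑ l, (W i l)^2) = 0 :=
        le_antisymm (by rw [← hs]; exact hQ i) (Real.sqrt_nonneg _)
      have h2 : ∑ l, (W i l)^2 = 0 := by
        nlinarith [Real.sq_sqrt (show (0:ℝ) ≤ ∑ l, (W i l)^2 by positivity)]
      have h3 := (Finset.sum_eq_zero_iff_of_nonneg
        (fun l _ => sq_nonneg (W i l))).mp h2 k (Finset.mem_univ k)
      exact pow_eq_zero_iff (two_ne_zero) |>.mp h3
    have h4 := congrFun (congrFun hW ⟨0, hm⟩) ⟨0, hm⟩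
    simp [Matrix.mul_apply, Matrix.one_apply, hz] at h4
  have ha : 0 ≤ al := by
    rcases Nat.eq_zero_or_pos r with hr | hr
    · rw [hal, hr]; norm_num
    · exact nonneg_of U al hr hU hUinc
  have hb : 0 ≤ be := by
    rcases Nat.eq_zero_or_pos rb with hr | hr
    · rw [hbe, hr]; norm_num
    · exact nonneg_of Ub be hr hUb hUbinc
  -- row sum bounds
  have rowsq : ∀ {m : ℕ} (W : Matrix (Fin n) (Fin m) ℝ) (c : ℝ), 0 ≤ c →
      (∀ i, Real.sqrt (∑ k, (W i k)^2) ≤ Real.sqrt c) → ∀ i, ∑ k, (W i k)^2 ≤ c := by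
    intro m W c hc hQ i
    have h1 : (0:ℝ) ≤ ∑ k, (W i k)^2 := by positivity
    calc ∑ k, (W i k)^2 = Real.sqrt (∑ k, (W i k)^2) ^ 2 := (Real.sq_sqrt h1).symm
      _ ≤ Real.sqrt c ^ 2 := pow_le_pow_left₀ (Real.sqrt_nonneg _) (hQ i) 2
      _ = c := Real.sq_sqrt hc
  have hUrow := rowsq U al ha hUinc
  have hVrow := rowsq V al ha hVinc
  have hUbrow := rowsq Ub be hb hUbinc
  have hVbrow := rowsq Vb be hb hVbinc
  -- diagonal bounds
  have hSd : ∀ i, (U * Uᵀ) i i ≤ al := fun i => by rw [aux_diag]; exact hUrow i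
  have hS0 : ∀ i, 0 ≤ (U * Uᵀ) i i := fun i => by rw [aux_diag]; positivity
  have hSbd : ∀ i, (Ub * Ubᵀ) i i ≤ be := fun i => by rw [aux_diag]; exact hUbrow i
  have hTd : ∀ j, (V * Vᵀ) j j ≤ al := fun j => by rw [aux_diag]; exact hVrow j
  have hT0 : ∀ j, 0 ≤ (V * Vᵀ) j j := fun j => by rw [aux_diag]; positivity
  have hTbd : ∀ j, (Vb * Vbᵀ) j j ≤ be := fun j => by rw [aux_diag]; exact hVbrow j
  have hTb0 : ∀ j, 0 ≤ (Vb * Vbᵀ) j j := fun j => by rw [aux_diag]; positivity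
  -- cross sums
  have hpd : ∀ i : Fin n, ∑ x, (U * Uᵀ) x i * ((Ub * Ubᵀ) x i - (U * Uᵀ) x i) = 0 := by
    intro i
    have h2 := aux_sumsq' U hU i
    simp_rw [pow_two] at h2
    simp_rw [mul_sub]
    rw [Finset.sum_sub_distrib, aux_cross U Ub hUb CU hCU i, h2, sub_self]
  have hdd : ∀ i : Fin n, ∑ x, ((Ub * Ubᵀ) x i - (U * Uᵀ) x i)^2
      = (Ub * Ubᵀ) i i - (U * Uᵀ) i i := by
    intro i
    have e : ∀ x : Fin n, ((Ub * Ubᵀ) x i - (U * Uᵀ) x i)^2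
        = ((Ub * Ubᵀ) x i)^2 - 2 * ((U * Uᵀ) x i * (Ub * Ubᵀ) x i) + ((U * Uᵀ) x i)^2 :=
      fun x => by ring
    simp_rw [e]
    rw [Finset.sum_add_distrib, Finset.sum_sub_distrib, aux_sumsq' Ub hUb i,
      aux_sumsq' U hU i, ← Finset.mul_sum, aux_cross U Ub hUb CU hCU i]
    ring
  have hdd_le : ∀ i : Fin n, (Ub * Ubᵀ) i i - (U * Uᵀ) i i ≤ be :=
    fun i => by have := hS0 i; have := hSbd i; linarith
  have hdd_0 : ∀ i : Fin n, 0 ≤ (Ub * Ubᵀ) i i - (U * Uᵀ) i i := by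
    intro i
    rw [← hdd i]
    positivity
  -- entry formula
  have hPE : ∀ (i j x y : Fin n), projTc U V Ub Vb (Matrix.single i j 1) x y
      = (U * Uᵀ) x i * (Vb * Vbᵀ) j y
        + ((Ub * Ubᵀ) x i - (U * Uᵀ) x i) * ((V * Vᵀ) j y) := by
    intro i j x y
    have r1 : U * Uᵀ * Matrix.single i j (1:ℝ) * Vb * Vbᵀ
        = (U * Uᵀ) * Matrix.single i j 1 * (Vb * Vbᵀ) :=
      Matrix.mul_assoc (U * Uᵀ * Matrix.single i j (1:ℝ)) Vb Vbᵀ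
    have r2 : Ub * Ubᵀ * Matrix.single i j (1:ℝ) * V * Vᵀ
        = (Ub * Ubᵀ) * Matrix.single i j 1 * (V * Vᵀ) :=
      Matrix.mul_assoc (Ub * Ubᵀ * Matrix.single i j (1:ℝ)) V Vᵀ
    have r3 : U * Uᵀ * Matrix.single i j (1:ℝ) * V * Vᵀ
        = (U * Uᵀ) * Matrix.single i j 1 * (V * Vᵀ) :=
      Matrix.mul_assoc (U * Uᵀ * Matrix.single i j (1:ℝ)) V Vᵀ
    simp only [projTc]
    rw [Matrix.sub_apply, Matrix.add_apply, r1, r2, r3, aux_mul_std, aux_mul_std, aux_mul_std]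
    ring
  constructor
  · intro i j
    have hfr : frobNorm (projTc U V Ub Vb (Matrix.single i j 1)) ^ 2
        = ∑ x, ∑ y, (projTc U V Ub Vb (Matrix.single i j 1) x y)^2 := by
      unfold frobNorm
      rw [Real.sq_sqrt (by positivity)]
    rw [hfr]
    calc ∑ x, ∑ y, (projTc U V Ub Vb (Matrix.single i j 1) x y)^2
        = (∑ x, ((U * Uᵀ) x i)^2) * (∑ y, ((Vb * Vbᵀ) j y)^2)
          + 2 * ((∑ x, (U * Uᵀ) x i * ((Ub * Ubᵀ) x i - (U * Uᵀ) x i))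
            * (∑ y, (Vb * Vbᵀ) j y * ((V * Vᵀ) j y)))
          + (∑ x, ((Ub * Ubᵀ) x i - (U * Uᵀ) x i)^2) * (∑ y, ((V * Vᵀ) j y)^2) := by
          simp_rw [hPE i j]
          exact aux_expand _ _ _ _
      _ ≤ 2 * al * be := by
          rw [aux_sumsq' U hU i, aux_sumsq_row Vb hVb j, hpd i, hdd i, aux_sumsq_row V hV j]
          nlinarith [mul_le_mul (hSd i) (hTbd j) (hTb0 j) ha,
            mul_le_mul (hdd_le i) (hTd j) (hT0 j) hb, hS0 i, hdd_0 i, hTb0 j, hT0 j]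
  · intro i j b
    have hq2 : ((Vb * Vbᵀ) j b)^2 ≤ be * be := aux_cs Vb be hVbrow j b
    have hw2 : ((V * Vᵀ) j b)^2 ≤ al * al := aux_cs V al hVrow j b
    have hbbn : be * be ≤ μb0 ^ 2 * (rb:ℝ) ^ 2 / (n:ℝ) := by
      have h1 : be * be = μb0 ^ 2 * (rb:ℝ) ^ 2 / (n:ℝ) ^ 2 := by rw [hbe]; ring
      rw [h1, div_le_div_iff₀ (by positivity) hnpos]
      have h2 : (n:ℝ) ≤ (n:ℝ)^2 := by nlinarith
      nlinarith [mul_le_mul_of_nonneg_left h2 (show (0:ℝ) ≤ μb0^2*(rb:ℝ)^2 by positivity)]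
    calc ∑ x, (projTc U V Ub Vb (Matrix.single i j 1) x b)^2
        = (∑ x, ((U * Uᵀ) x i)^2) * ((Vb * Vbᵀ) j b)^2
          + 2 * ((∑ x, (U * Uᵀ) x i * ((Ub * Ubᵀ) x i - (U * Uᵀ) x i))
            * ((Vb * Vbᵀ) j b * ((V * Vᵀ) j b)))
          + (∑ x, ((Ub * Ubᵀ) x i - (U * Uᵀ) x i)^2) * ((V * Vᵀ) j b)^2 := by
          simp_rw [hPE i j]
          exact aux_expand2 _ _ _ _
      _ ≤ 2 * al * (μb0 ^ 2 * (rb:ℝ) ^ 2 / (n:ℝ)) := by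
          rw [aux_sumsq' U hU i, hpd i, hdd i]
          nlinarith [mul_le_mul (hSd i) hq2 (sq_nonneg ((Vb * Vbᵀ) j b)) ha,
            mul_le_mul (hdd_le i) hw2 (sq_nonneg ((V * Vᵀ) j b)) hb,
            mul_le_mul_of_nonneg_left hbbn ha, hS0 i, hdd_0 i, hb, ha, hle,
            mul_nonneg ha hb, mul_le_mul_of_nonneg_left hle hb,
            mul_le_mul_of_nonneg_left hbbn hb]

end
end
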